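/- Additivity of regular germs: if ω is a regular k-germ on D and a k-simplex S decomposes as S = Σᵢ Sᵢ + N + ∂T in the space of k-chains, where T is a (k+1)-chain whose convex hull lies in a single affine k-plane, and N is a linear combination of k-simplices each of zero k-volume, then ⟨S, ω⟩ = Σᵢ ⟨Sᵢ, ω⟩. -/

import Mathlib

/-- The euclidean space `ℝ^d` in which simplices live. -/
abbrev Pt (d : ℕ) := EuclideanSpace ℝ (Fin d)

/-- The `k`-dimensional volume of a `k`-simplex `[p₀ … p_k]` in `ℝ^d`. -/
noncomputable def vol {d k : ℕ} (S : Fin (k + 1) → Pt d) : ℝ :=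
  (1 / (Nat.factorial k : ℝ)) *
    Real.sqrt (Matrix.det (Matrix.of fun i j : Fin k =>
      ∑ m : Fin d, (S i.succ m - S 0 m) * (S j.succ m - S 0 m)))

/-- The coboundary of a germ, dual to the alternating-sum boundary operator. -/
noncomputable def cobdry {d n : ℕ} (ω : (Fin n → Pt d) → ℝ) :
    (Fin (n + 1) → Pt d) → ℝ :=
  fun T => ∑ i : Fin (n + 1), (-1 : ℝ) ^ (i : ℕ) * ω (T ∘ i.succAbove)

/-- The boundary of a `(k+1)`-simplex as a `k`-chain. -/
noncomputable def bdryChain {d k : ℕ} (S : Fin (k + 2) → Pt d) :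
    (Fin (k + 1) → Pt d) →₀ ℝ :=
  ∑ i : Fin (k + 2), (-1 : ℝ) ^ (i : ℕ) • Finsupp.single (S ∘ i.succAbove) (1 : ℝ)

/-- A `k`-germ on `D` is nonatomic if it vanishes on every `k`-simplex in `D`
of zero `k`-volume. -/
def Nonatomic {d k : ℕ} (D : Set (Pt d)) (ω : (Fin (k + 1) → Pt d) → ℝ) : Prop :=
  ∀ S : Fin (k + 1) → Pt d, convexHull ℝ (Set.range S) ⊆ D → vol S = 0 → ω S = 0

/-- A `k`-germ on `D` is closed on `k`-planes if the pull-back by every affine map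
`φ : ℝ^k → ℝ^d` has vanishing coboundary on simplices mapped into `D`. -/
def ClosedOnPlanes {d k : ℕ} (D : Set (Pt d)) (ω : (Fin (k + 1) → Pt d) → ℝ) : Prop :=
  ∀ φ : (Fin k → ℝ) →ᵃ[ℝ] Pt d, ∀ T : Fin (k + 2) → (Fin k → ℝ),
    convexHull ℝ (Set.range fun i => φ (T i)) ⊆ D →
      cobdry (d := k) (fun S : Fin (k + 1) → Pt k => ω (fun i => φ (WithLp.ofLp (S i))))
        (fun i => WithLp.toLp 2 (T i)) = 0

lemma cobdry_zero_of_subplane {d k : ℕ} (D : Set (Pt d)) (ω : (Fin (k + 1) → Pt d) → ℝ)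
    (hcl : ∀ φ : (Fin k → ℝ) →ᵃ[ℝ] Pt d, ∀ T : Fin (k + 2) → (Fin k → ℝ),
      convexHull ℝ (Set.range fun i => φ (T i)) ⊆ D →
        cobdry (d := k) (fun S : Fin (k + 1) → Pt k => ω (fun i => φ (WithLp.ofLp (S i))))
          (fun i => WithLp.toLp 2 (T i)) = 0)
    (π : AffineSubspace ℝ (Pt d)) (hπ : Module.finrank ℝ π.direction ≤ k)
    (U : Fin (k + 2) → Pt d) (hUD : convexHull ℝ (Set.range U) ⊆ D)
    (hUπ : ∀ i, U i ∈ π) : cobdry ω U = 0 := by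
  set V := π.direction
  set b := Module.finBasis ℝ V with hb
  set g : (Fin k → ℝ) →ₗ[ℝ] Pt d :=
    V.subtype ∘ₗ (b.equivFun.symm.toLinearMap) ∘ₗ LinearMap.funLeft ℝ ℝ (Fin.castLE hπ) with hg
  have hrange : ∀ v ∈ V, ∃ x, g x = v := by
    intro v hv
    obtain ⟨x, hx⟩ := LinearMap.funLeft_surjective_of_injective ℝ ℝ (Fin.castLE hπ)
      (Fin.castLE_injective hπ) (b.equivFun ⟨v, hv⟩)
    refine ⟨x, ?_⟩
    simp only [hg, LinearMap.coe_comp, Function.comp_apply, hx]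
    have h2 := congrArg (Subtype.val) (b.sum_repr ⟨v, hv⟩)
    simpa using h2
  set φ : (Fin k → ℝ) →ᵃ[ℝ] Pt d :=
    { toFun := fun x => g x + U 0
      linear := g
      map_vadd' := by intro p v; simp [map_add, add_assoc] } with hφ
  have hTmem : ∀ i, U i - U 0 ∈ V := fun i => by
    simpa using AffineSubspace.vsub_mem_direction (hUπ i) (hUπ 0)
  set T' : Fin (k + 2) → Fin k → ℝ := fun i => (hrange _ (hTmem i)).choose with hT'
  have hφT' : ∀ i, φ (T' i) = U i := by
    intro i
    have := (hrange _ (hTmem i)).choose_spec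
    simp [hφ, hT', this, AffineMap.coe_mk]
  have key := hcl φ T' (by
    rw [show (fun i => φ (T' i)) = U from funext hφT']
    exact hUD)
  rw [← key]
  unfold cobdry
  refine Finset.sum_congr rfl fun i _ => ?_
  congr 1
  congr 1
  funext j
  simp [Function.comp, hφT']

/-- Additivity of regular germs: if `ω` is a regular `k`-germ on `D` and a
`k`-simplex `S` decomposes as `S = Σᵢ Sᵢ + Σⱼ aⱼ Nⱼ + ∂T` in `k`-chains, where each
`Nⱼ` has zero `k`-volume and `T` is a `(k+1)`-chain whose vertices lie in a single
affine `k`-plane, then `⟨S, ω⟩ = Σᵢ ⟨Sᵢ, ω⟩`. -/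
theorem regular_additive {d k : ℕ} (D : Set (Pt d)) (ω : (Fin (k + 1) → Pt d) → ℝ)
    (hreg : Nonatomic D ω ∧ ClosedOnPlanes D ω)
    (S : Fin (k + 1) → Pt d) (halfS : convexHull ℝ (Set.range S) ⊆ D)
    (m₁ m₂ : ℕ)
    (Si : Fin m₁ → (Fin (k + 1) → Pt d))
    (hSi : ∀ i, convexHull ℝ (Set.range (Si i)) ⊆ D)
    (a : Fin m₂ → ℝ) (Nj : Fin m₂ → (Fin (k + 1) → Pt d))
    (hNj : ∀ j, convexHull ℝ (Set.range (Nj j)) ⊆ D)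
    (hNvol : ∀ j, vol (Nj j) = 0)
    (T : (Fin (k + 2) → Pt d) →₀ ℝ)
    (hT : ∀ U ∈ T.support, convexHull ℝ (Set.range U) ⊆ D)
    (π : AffineSubspace ℝ (Pt d))
    (hπ : Module.finrank ℝ π.direction ≤ k)
    (hTπ : ∀ U ∈ T.support, ∀ i, U i ∈ π)
    (hdecomp : Finsupp.single S (1 : ℝ)
      = (∑ i, Finsupp.single (Si i) (1 : ℝ))
        + (∑ j, a j • Finsupp.single (Nj j) (1 : ℝ))
        + T.sum (fun U c => c • bdryChain U)) :
    ω S = ∑ i, ω (Si i) := by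
  obtain ⟨hna, hcl⟩ := hreg
  set L := Finsupp.linearCombination ℝ ω with hL
  have hB : ∀ U ∈ T.support, L (bdryChain U) = 0 := by
    intro U hU
    have h1 : L (bdryChain U) = cobdry ω U := by
      unfold bdryChain cobdry
      rw [map_sum]
      refine Finset.sum_congr rfl fun i _ => ?_
      rw [map_smul, hL, Finsupp.linearCombination_single]
      simp [smul_eq_mul]
    rw [h1]
    exact cobdry_zero_of_subplane D ω hcl π hπ U (hT U hU) (hTπ U hU)
  have hNzero : ∀ j, ω (Nj j) = 0 := fun j => hna _ (hNj j) (hNvol j)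
  have h := congrArg L hdecomp
  rw [map_add, map_add, map_sum, map_sum, Finsupp.sum, map_sum] at h
  rw [Finset.sum_congr rfl (fun U hU => by rw [map_smul, hB U hU, smul_zero] :
    ∀ U ∈ T.support, L (T U • bdryChain U) = 0)] at h
  simp only [hL, Finsupp.linearCombination_single, one_smul, map_smul, smul_eq_mul,
    Finset.sum_const_zero, add_zero, one_mul] at h
  rw [h]
  simp [hNzero]
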